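/- Let α ∈ ℝ, let A₀ : H → H be continuous with (A₀x − A₀y, x − y) + α|x − y|² ≥ 0 for all x, y ∈ H, and let φ : H → ℝ ∪ {+∞} be proper, convex and lower semicontinuous. Define the subdifferential ∂φ(x) := { w ∈ H : φ(x) < +∞ and φ(x) + (w, z − x) ≤ φ(z) for all z ∈ H } and set A := { (x, A₀x + w) : x ∈ H, w ∈ ∂φ(x) }. Assume there exist h₀ ∈ H, R₀ > 0 and a₀ ∈ ℝ such that φ(h₀ + x) ≤ a₀ for every x ∈ X with ‖x‖_X ≤ R₀. Then there exist constants r₀, a₁, a₂ > 0 such that r₀‖y‖_{X*} ≤ (y, x − h₀) + a₁|x|² + a₂ for all (x,y) ∈ A; that is, A satisfies condition (H₁-ii). -/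

import Mathlib

open MeasureTheory Set Filter
open scoped RealInnerProductSpace Topology NNReal

noncomputable section

variable {H : Type*} [NormedAddCommGroup H] [InnerProductSpace ℝ H] [CompleteSpace H]
variable {X : Type*} [NormedAddCommGroup X] [NormedSpace ℝ X]

/-- The dual norm `‖y‖_{X*} = sup { ⟪y, j x⟫ : ‖x‖_X ≤ 1 }` of `y ∈ H`, relative to the
embedding `j : X → H`. -/
def dualNorm (j : X →L[ℝ] H) (y : H) : ℝ :=
  sSup ((fun x : X => ⟪y, j x⟫) '' {x : X | ‖x‖ ≤ 1})

/-- The set of all partition variation sums of `g` on `[0,T]`, with increments measured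
by the gauge `N`. -/
def varSums (N : H → ℝ) (g : ℝ → H) (T : ℝ) : Set ℝ :=
  { v | ∃ m : ℕ, ∃ t : Fin (m + 1) → ℝ, Monotone t ∧ t 0 = 0 ∧ t (Fin.last m) = T ∧
      v = ∑ i : Fin m, N (g (t i.succ) - g (t i.castSucc)) }

/-- `g` has bounded variation on `[0,T]` w.r.t. the gauge `N`. -/
def HasBV (N : H → ℝ) (g : ℝ → H) (T : ℝ) : Prop := BddAbove (varSums N g T)

/-- The total variation (BV norm) of `g` on `[0,T]` w.r.t. the gauge `N`. -/
def bvNorm (N : H → ℝ) (g : ℝ → H) (T : ℝ) : ℝ := sSup (varSums N g T)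

/-- A multivalued operator `A ⊆ H × H` is monotone. -/
def IsMonotoneOp (A : Set (H × H)) : Prop :=
  ∀ p ∈ A, ∀ q ∈ A, 0 ≤ ⟪p.2 - q.2, p.1 - q.1⟫

/-- A multivalued operator `A ⊆ H × H` is maximal monotone. -/
def IsMaximalMonotone (A : Set (H × H)) : Prop :=
  IsMonotoneOp A ∧ ∀ u v : H, (∀ p ∈ A, 0 ≤ ⟪v - p.2, u - p.1⟫) → (u, v) ∈ A

/-- The operator `A + αI`. -/
def addAlphaI (A : Set (H × H)) (α : ℝ) : Set (H × H) :=
  (fun p : H × H => (p.1, p.2 + α • p.1)) '' A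

/-- The domain `D(A)` of a multivalued operator. -/
def opDom (A : Set (H × H)) : Set H := {x | ∃ y, (x, y) ∈ A}

/-- Hypothesis (H₁): `A` is `α`-maximal monotone and satisfies the coercivity-type
inequality with constants `h₀, r₀, a₁, a₂`. -/
def HypH1 (A : Set (H × H)) (j : X →L[ℝ] H) (α : ℝ) (h₀ : H) (r₀ a₁ a₂ : ℝ) : Prop :=
  IsMaximalMonotone (addAlphaI A α) ∧ 0 < r₀ ∧ 0 < a₁ ∧ 0 < a₂ ∧
    ∀ p ∈ A, r₀ * dualNorm j p.2 ≤ ⟪p.2, p.1 - h₀⟫ + a₁ * ‖p.1‖ ^ 2 + a₂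

/-- `f ∈ W^{1,1}([0,T];H)`. -/
def MemW11 (f : ℝ → H) (T : ℝ) : Prop :=
  ∃ f' : ℝ → H, IntegrableOn f' (Icc 0 T) ∧
    ∀ t ∈ Icc (0:ℝ) T, f t = f 0 + ∫ s in (0:ℝ)..t, f' s

/-- `g ∈ W^{2,1}([0,T];H)`. -/
def MemW21 (g : ℝ → H) (T : ℝ) : Prop :=
  ∃ g' : ℝ → H, MemW11 g' T ∧ ∀ t ∈ Icc (0:ℝ) T, g t = g 0 + ∫ s in (0:ℝ)..t, g' s

/-- `(u,η) = GD(A;u₀,f,M)`: generalized deterministic solution of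
`du + Au(dt) ∋ f dt + dM`, `u(0) = u₀`, on `[0,T]`. -/
def IsGDSolution (A : Set (H × H)) (j : X →L[ℝ] H) (T : ℝ)
    (u₀ : H) (f : ℝ → H) (M : ℝ → X) (u η : ℝ → H) : Prop :=
  -- (d₁)
  (ContinuousOn u (Icc 0 T) ∧ (∀ t ∈ Icc (0:ℝ) T, u t ∈ closure (opDom A)) ∧ u 0 = u₀) ∧
  -- (d₂)
  (ContinuousOn η (Icc 0 T) ∧ η 0 = 0 ∧ HasBV (dualNorm j) η T) ∧
  -- (d₃)
  (∀ t ∈ Icc (0:ℝ) T, u t + η t = u₀ + (∫ s in (0:ℝ)..t, f s) + j (M t)) ∧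
  -- (d₄)
  ∃ (u0s : ℕ → H) (fs : ℕ → ℝ → H) (Ms : ℕ → ℝ → X) (us hs : ℕ → ℝ → H),
    (∀ n, u0s n ∈ opDom A) ∧
    (∀ n, MemW11 (fs n) T) ∧
    (∀ n, ContinuousOn (Ms n) (Icc 0 T) ∧ Ms n 0 = 0 ∧ MemW21 (fun t => j (Ms n t)) T) ∧
    (∀ n, ∃ L : ℝ≥0, LipschitzOnWith L (us n) (Icc 0 T)) ∧
    (∀ n, AEStronglyMeasurable (hs n) (volume.restrict (Ioc 0 T)) ∧
          ∃ C : ℝ, ∀ᵐ s ∂(volume.restrict (Ioc (0:ℝ) T)), ‖hs n s‖ ≤ C) ∧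
    (∀ n, ∀ᵐ s ∂(volume.restrict (Ioc (0:ℝ) T)), (us n s, hs n s) ∈ A) ∧
    (∀ n, ∀ t ∈ Icc (0:ℝ) T,
        us n t + (∫ s in (0:ℝ)..t, hs n s) =
          u0s n + (∫ s in (0:ℝ)..t, fs n s) + j (Ms n t)) ∧
    Tendsto u0s atTop (𝓝 u₀) ∧
    Tendsto (fun n => ∫ s in Icc (0:ℝ) T, ‖fs n s - f s‖) atTop (𝓝 0) ∧
    TendstoUniformlyOn Ms M atTop (Icc 0 T) ∧
    TendstoUniformlyOn us u atTop (Icc 0 T) ∧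
    TendstoUniformlyOn (fun n t => ∫ s in (0:ℝ)..t, hs n s) η atTop (Icc 0 T) ∧
    ∃ C : ℝ, ∀ n, ∀ v ∈ varSums (dualNorm j) (fun t => ∫ s in (0:ℝ)..t, hs n s) T, v ≤ C

end

noncomputable section

variable {H : Type*} [NormedAddCommGroup H] [InnerProductSpace ℝ H]

/-- The subdifferential of `φ : H → ℝ ∪ {+∞}` at `x`:
`∂φ(x) = { w : φ(x) < +∞ and φ(x) + (w, z − x) ≤ φ(z) for all z }`. -/
def subdiff (φ : H → EReal) (x : H) : Set H :=
  {w : H | φ x ≠ ⊤ ∧ ∀ z : H, φ x + ((⟪w, z - x⟫ : ℝ) : EReal) ≤ φ z}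

end


theorem exists_affine_minorant' {H : Type*} [NormedAddCommGroup H] [NormedSpace ℝ H]
    (φ : H → EReal) (hφbot : ∀ x, φ x ≠ ⊥) (hφproper : ∃ x, φ x ≠ ⊤)
    (hφconv : ∀ x y : H, ∀ a b : ℝ, 0 ≤ a → 0 ≤ b → a + b = 1 →
      φ (a • x + b • y) ≤ (a : EReal) * φ x + (b : EReal) * φ y)
    (hφlsc : LowerSemicontinuous φ) :
    ∃ k₁ k₂ : ℝ, 0 ≤ k₁ ∧ 0 ≤ k₂ ∧
      ∀ (z : H) (s : ℝ), φ z = (s : EReal) → -(k₁ * ‖z‖ + k₂) ≤ s := by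
  classical
  set E : Set (H × ℝ) := {p | φ p.1 ≤ ((p.2 : ℝ) : EReal)} with hE
  -- E is closed
  have hclosed : IsClosed E := by
    rw [← isOpen_compl_iff, isOpen_iff_mem_nhds]
    intro p hp
    have hlt : ((p.2 : ℝ) : EReal) < φ p.1 := lt_of_not_ge hp
    obtain ⟨c, hc1, hc2⟩ := EReal.exists_between_coe_real hlt
    have hU : ∀ᶠ z in 𝓝 p.1, (c : EReal) < φ z := hφlsc p.1 _ hc2
    have hV : Iio c ∈ 𝓝 p.2 := Iio_mem_nhds (by exact_mod_cast hc1)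
    have : ∀ᶠ q in 𝓝 p, q ∈ Eᶜ := by
      rw [show p = (p.1, p.2) from rfl, nhds_prod_eq]
      filter_upwards [Filter.prod_mem_prod hU hV] with q hq
      simp only [Set.mem_compl_iff, hE, Set.mem_setOf_eq, not_le]
      exact lt_trans (by exact_mod_cast hq.2) hq.1
    exact this
  -- E is convex
  have hconv : Convex ℝ E := by
    intro p hp q hq a b ha hb hab
    have hp' : φ p.1 ≤ ((p.2 : ℝ) : EReal) := hp
    have hq' : φ q.1 ≤ ((q.2 : ℝ) : EReal) := hq
    have hp1 : φ p.1 ≠ ⊤ := fun h => by rw [h] at hp'; simp at hp'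
    have hq1 : φ q.1 ≠ ⊤ := fun h => by rw [h] at hq'; simp at hq'
    set s := (φ p.1).toReal with hs
    set t := (φ q.1).toReal with ht
    have hps : φ p.1 = (s : EReal) := (EReal.coe_toReal hp1 (hφbot _)).symm
    have hqt : φ q.1 = (t : EReal) := (EReal.coe_toReal hq1 (hφbot _)).symm
    have hsle : s ≤ p.2 := by rw [hps] at hp'; exact_mod_cast hp'
    have htle : t ≤ q.2 := by rw [hqt] at hq'; exact_mod_cast hq'
    have key := hφconv p.1 q.1 a b ha hb hab
    rw [hps, hqt] at key
    have : φ (a • p.1 + b • q.1) ≤ ((a * s + b * t : ℝ) : EReal) := by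
      rw [EReal.coe_add, EReal.coe_mul, EReal.coe_mul]; exact key
    refine le_trans this ?_
    have : a * s + b * t ≤ a * p.2 + b * q.2 := by
      have := mul_le_mul_of_nonneg_left hsle ha
      have := mul_le_mul_of_nonneg_left htle hb
      linarith
    exact_mod_cast this
  -- separation
  obtain ⟨x₀, hx₀⟩ := hφproper
  set t₀ := (φ x₀).toReal with ht₀
  have hx₀eq : φ x₀ = (t₀ : EReal) := (EReal.coe_toReal hx₀ (hφbot _)).symm
  have hpnot : ((x₀, t₀ - 1) : H × ℝ) ∉ E := by
    simp only [hE, Set.mem_setOf_eq, hx₀eq, EReal.coe_le_coe_iff]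
    intro h; linarith
  obtain ⟨f, u, hfp, hfE⟩ := geometric_hahn_banach_point_closed hconv hclosed hpnot
  have hkey : ∀ (z : H) (r : ℝ), f (z, r) = f (z, 0) + r * f (0, 1) := by
    intro z r
    have : ((z, r) : H × ℝ) = (z, (0 : ℝ)) + r • ((0 : H), (1 : ℝ)) := by
      simp [Prod.ext_iff]
    rw [this, map_add, f.map_smul, smul_eq_mul]
  set c := f ((0 : H), (1 : ℝ)) with hc
  have hmem₀ : ((x₀, t₀) : H × ℝ) ∈ E := by
    simp only [hE, Set.mem_setOf_eq, hx₀eq]; exact le_refl _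
  have hcpos : 0 < c := by
    have h1 := hfE _ hmem₀
    rw [hkey] at h1 hfp
    nlinarith [hfp, h1]
  refine ⟨‖f‖ / c, |u| / c, by positivity, by positivity, ?_⟩
  intro z s hzs
  have hmem : ((z, s) : H × ℝ) ∈ E := by
    simp only [hE, Set.mem_setOf_eq, hzs]; exact le_refl _
  have h1 := hfE _ hmem
  rw [hkey] at h1
  have h2 : f (z, (0 : ℝ)) ≤ ‖f‖ * ‖z‖ := by
    have := f.le_opNorm (z, (0 : ℝ))
    have hn : ‖((z, (0 : ℝ)) : H × ℝ)‖ = ‖z‖ := by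
      simp [Prod.norm_def]
    rw [hn] at this
    exact (le_abs_self _).trans (by rwa [← Real.norm_eq_abs])
  have h3 : -(‖f‖ * ‖z‖ + |u|) ≤ s * c := by
    nlinarith [abs_nonneg u, neg_abs_le u]
  have h4 : -(‖f‖ / c * ‖z‖ + |u| / c) = (-(‖f‖ * ‖z‖ + |u|)) / c := by
    field_simp
  rw [h4, div_le_iff₀ hcpos]
  exact h3

theorem arith_aux (IA IW n d c k₁ k₂ a₀ α L a₁ a₂ : ℝ)
    (hA : IA ≤ c * (n + d) + |α| * (n + d) ^ 2)
    (hw1 : IW ≤ a₀ + k₁ * n + k₂)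
    (hxsq : n ≤ 1 + n ^ 2)
    (hL : L = c + 2 * |α| * d + k₁) (hLnn : 0 ≤ L)
    (ha₁ : a₁ = |α| + L + 1)
    (ha₂ : a₂ = c * d + |α| * d ^ 2 + |a₀| + k₂ + L + 1) :
    IA + IW ≤ a₁ * n ^ 2 + a₂ := by
  subst hL ha₁ ha₂
  nlinarith [mul_le_mul_of_nonneg_left hxsq hLnn, le_abs_self a₀, sq_nonneg n,
    abs_nonneg α]

theorem real_le_one_add_sq (t : ℝ) : t ≤ 1 + t ^ 2 := by nlinarith [sq_nonneg (t - 1)]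

/-- **Theorem 2.2, (H₁-I) ⟹ (H₁-ii).** If `A = A₀ + ∂φ` with `A₀` continuous and
`α`-monotone and `φ` proper convex l.s.c. bounded above near `h₀` along the `X`-ball of
radius `R₀`, then `A` satisfies the coercivity condition (H₁-ii). -/
theorem hypH1_of_subdifferential_structure
    {H : Type*} [NormedAddCommGroup H] [InnerProductSpace ℝ H] [CompleteSpace H]
    [SecondCountableTopology H]
    {X : Type*} [NormedAddCommGroup X] [NormedSpace ℝ X]
    [SecondCountableTopology X] [SecondCountableTopology (StrongDual ℝ X)]
    (j : X →L[ℝ] H) (hj_inj : Function.Injective j) (hj_dense : DenseRange (⇑j))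
    (α : ℝ) (A₀ : H → H) (hA₀cont : Continuous A₀)
    (hA₀mono : ∀ x y : H, 0 ≤ ⟪A₀ x - A₀ y, x - y⟫ + α * ‖x - y‖ ^ 2)
    (φ : H → EReal) (hφbot : ∀ x, φ x ≠ ⊥) (hφproper : ∃ x, φ x ≠ ⊤)
    (hφconv : ∀ x y : H, ∀ a b : ℝ, 0 ≤ a → 0 ≤ b → a + b = 1 →
      φ (a • x + b • y) ≤ (a : EReal) * φ x + (b : EReal) * φ y)
    (hφlsc : LowerSemicontinuous φ)
    (h₀ : H) (R₀ : ℝ) (hR₀ : 0 < R₀) (a₀ : ℝ)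
    (hφbdd : ∀ x : X, ‖x‖ ≤ R₀ → φ (h₀ + j x) ≤ (a₀ : EReal)) :
    ∃ r₀ a₁ a₂ : ℝ, 0 < r₀ ∧ 0 < a₁ ∧ 0 < a₂ ∧
      ∀ x w : H, w ∈ subdiff φ x →
        r₀ * dualNorm j (A₀ x + w) ≤ ⟪A₀ x + w, x - h₀⟫ + a₁ * ‖x‖ ^ 2 + a₂ := by
  classical
  obtain ⟨k₁, k₂, hk₁, hk₂, hmin⟩ := exists_affine_minorant' φ hφbot hφproper hφconv hφlsc
  obtain ⟨δ, hδpos, hδ⟩ : ∃ δ > 0, ∀ z : H, dist z h₀ < δ → dist (A₀ z) (A₀ h₀) < 1 :=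
    Metric.continuous_iff.1 hA₀cont h₀ 1 one_pos
  obtain ⟨c, hc⟩ : ∃ c : ℝ, c = ‖A₀ h₀‖ + 1 := ⟨_, rfl⟩
  have hcpos : 0 < c := by rw [hc]; positivity
  obtain ⟨d, hd⟩ : ∃ d : ℝ, d = ‖h₀‖ + δ := ⟨_, rfl⟩
  have hdnn : 0 ≤ d := by rw [hd]; positivity
  obtain ⟨r₀, hr₀def⟩ : ∃ r : ℝ, r = min R₀ (δ / (2 * (‖j‖ + 1))) := ⟨_, rfl⟩
  have hr₀pos : 0 < r₀ := by rw [hr₀def]; exact lt_min hR₀ (by positivity)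
  have hrR : r₀ ≤ R₀ := by rw [hr₀def]; exact min_le_left _ _
  have hrδ : r₀ ≤ δ / (2 * (‖j‖ + 1)) := by rw [hr₀def]; exact min_le_right _ _
  obtain ⟨L, hL⟩ : ∃ L : ℝ, L = c + 2 * |α| * d + k₁ := ⟨_, rfl⟩
  have hLnn : 0 ≤ L := by
    rw [hL]
    have h2 := mul_nonneg (mul_nonneg (by norm_num : (0:ℝ) ≤ 2) (abs_nonneg α)) hdnn
    linarith [hcpos.le, hk₁]
  obtain ⟨a₁, ha₁⟩ : ∃ a₁ : ℝ, a₁ = |α| + L + 1 := ⟨_, rfl⟩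
  obtain ⟨a₂, ha₂⟩ : ∃ a₂ : ℝ, a₂ = c * d + |α| * d ^ 2 + |a₀| + k₂ + L + 1 := ⟨_, rfl⟩
  have ha₁pos : 0 < a₁ := by rw [ha₁]; linarith [abs_nonneg α, hLnn]
  have ha₂pos : 0 < a₂ := by
    rw [ha₂]
    have h1 := mul_nonneg hcpos.le hdnn
    have h2 := mul_nonneg (abs_nonneg α) (sq_nonneg d)
    linarith [abs_nonneg a₀, hk₂, hLnn]
  refine ⟨r₀, a₁, a₂, hr₀pos, ha₁pos, ha₂pos, ?_⟩
  intro x w hw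
  obtain ⟨hwtop, hwsub⟩ := hw
  obtain ⟨y, hy⟩ : ∃ y : H, y = A₀ x + w := ⟨_, rfl⟩
  obtain ⟨B, hB⟩ : ∃ B : ℝ, B = ⟪y, x - h₀⟫ + a₁ * ‖x‖ ^ 2 + a₂ := ⟨_, rfl⟩
  -- pointwise bound over the unit ball of X
  have hpt : ∀ xt : X, ‖xt‖ ≤ 1 → r₀ * ⟪y, j xt⟫ ≤ B := by
    intro xt hxt
    obtain ⟨z, hz⟩ : ∃ z : H, z = h₀ + j (r₀ • xt) := ⟨_, rfl⟩
    have hjz : z - h₀ = r₀ • j xt := by rw [hz, j.map_smul]; abel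
    have hznear : ‖z - h₀‖ < δ := by
      rw [hjz, norm_smul, Real.norm_eq_abs, abs_of_pos hr₀pos]
      have h1 : ‖j xt‖ ≤ ‖j‖ := by
        calc ‖j xt‖ ≤ ‖j‖ * ‖xt‖ := j.le_opNorm xt
        _ ≤ ‖j‖ * 1 := mul_le_mul_of_nonneg_left hxt (norm_nonneg _)
        _ = ‖j‖ := mul_one _
      have h3 : r₀ * ‖j xt‖ ≤ δ / (2 * (‖j‖ + 1)) * (‖j‖ + 1) :=
        mul_le_mul hrδ (h1.trans (by linarith)) (norm_nonneg _) (by positivity)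
      have h4 : δ / (2 * (‖j‖ + 1)) * (‖j‖ + 1) = δ / 2 := by
        field_simp
      rw [h4] at h3
      linarith
    have hAz : ‖A₀ z‖ ≤ c := by
      have h5 := hδ z (by rwa [dist_eq_norm])
      rw [dist_eq_norm] at h5
      calc ‖A₀ z‖ = ‖A₀ h₀ + (A₀ z - A₀ h₀)‖ := by rw [add_comm, sub_add_cancel]
      _ ≤ ‖A₀ h₀‖ + ‖A₀ z - A₀ h₀‖ := norm_add_le _ _
      _ ≤ c := by rw [hc]; linarith
    have hznorm : ‖z‖ ≤ d := by
      calc ‖z‖ = ‖h₀ + (z - h₀)‖ := by rw [add_comm, sub_add_cancel]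
      _ ≤ ‖h₀‖ + ‖z - h₀‖ := norm_add_le _ _
      _ ≤ d := by rw [hd]; linarith
    have hzx : ‖z - x‖ ≤ ‖x‖ + d := by
      calc ‖z - x‖ ≤ ‖z‖ + ‖x‖ := norm_sub_le _ _
      _ ≤ ‖x‖ + d := by linarith
    -- A₀ part
    have hA : ⟪A₀ x, z - x⟫ ≤ c * (‖x‖ + d) + |α| * (‖x‖ + d) ^ 2 := by
      have hmono := hA₀mono x z
      have e1 : ⟪A₀ x - A₀ z, x - z⟫ = ⟪A₀ z, z - x⟫ - ⟪A₀ x, z - x⟫ := by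
        rw [inner_sub_left, show x - z = -(z - x) from by abel, inner_neg_right,
          inner_neg_right]
        ring
      rw [e1] at hmono
      have e2 : ⟪A₀ z, z - x⟫ ≤ c * (‖x‖ + d) := by
        calc ⟪A₀ z, z - x⟫ ≤ ‖A₀ z‖ * ‖z - x‖ := real_inner_le_norm _ _
        _ ≤ c * (‖x‖ + d) := mul_le_mul hAz hzx (norm_nonneg _) hcpos.le
      have e3 : α * ‖x - z‖ ^ 2 ≤ |α| * (‖x‖ + d) ^ 2 := by
        have e4 : ‖x - z‖ = ‖z - x‖ := by rw [← neg_sub, norm_neg]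
        rw [e4]
        have h5 : ‖z - x‖ ^ 2 ≤ (‖x‖ + d) ^ 2 :=
          pow_le_pow_left₀ (norm_nonneg _) hzx 2
        nlinarith [le_abs_self α, abs_nonneg α, sq_nonneg ‖z - x‖]
      linarith
    -- w part
    have hfin : φ x = ((φ x).toReal : EReal) := (EReal.coe_toReal hwtop (hφbot x)).symm
    obtain ⟨p, hp⟩ : ∃ p : ℝ, φ x = (p : EReal) := ⟨_, hfin⟩
    have hplb : -(k₁ * ‖x‖ + k₂) ≤ p := hmin x p hp
    have hzballs : ‖r₀ • xt‖ ≤ R₀ := by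
      rw [norm_smul, Real.norm_eq_abs, abs_of_pos hr₀pos]
      calc r₀ * ‖xt‖ ≤ r₀ * 1 := mul_le_mul_of_nonneg_left hxt hr₀pos.le
      _ = r₀ := mul_one _
      _ ≤ R₀ := hrR
    have hφz : φ z ≤ (a₀ : EReal) := hz ▸ hφbdd (r₀ • xt) hzballs
    have hsub := (hwsub z).trans hφz
    rw [hp, ← EReal.coe_add] at hsub
    have hW : p + ⟪w, z - x⟫ ≤ a₀ := by exact_mod_cast hsub
    clear hsub hφz hfin hp hwsub hφbdd hφconv hφlsc hφbot hφproper hmin hwtop hδ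
    -- combine
    have hsplit : r₀ * ⟪y, j xt⟫ = ⟪A₀ x, z - x⟫ + ⟪w, z - x⟫ + ⟪y, x - h₀⟫ := by
      have h6 : r₀ * ⟪y, j xt⟫ = ⟪y, z - h₀⟫ := by
        rw [hjz, real_inner_smul_right]
      rw [h6, show z - h₀ = (z - x) + (x - h₀) from by abel, inner_add_right,
        hy, inner_add_left]
    have hxsq : ‖x‖ ≤ 1 + ‖x‖ ^ 2 := real_le_one_add_sq ‖x‖
    have hw1 : ⟪w, z - x⟫ ≤ a₀ + k₁ * ‖x‖ + k₂ := by linarith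
    have hfinal : ⟪A₀ x, z - x⟫ + ⟪w, z - x⟫ ≤ a₁ * ‖x‖ ^ 2 + a₂ :=
      arith_aux _ _ _ _ _ _ _ _ _ _ _ _ hA hw1 hxsq hL hLnn ha₁ ha₂
    rw [hsplit, hB]
    linarith
  -- sup over the unit ball
  have hset : dualNorm j y ≤ B / r₀ := by
    apply csSup_le
    · exact ⟨⟪y, j 0⟫, ⟨0, by simp, rfl⟩⟩
    · rintro v ⟨xt, hxt, rfl⟩
      rw [le_div_iff₀ hr₀pos, mul_comm]
      exact hpt xt hxt
  rw [← hy, ← hB]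
  calc r₀ * dualNorm j y ≤ r₀ * (B / r₀) := mul_le_mul_of_nonneg_left hset hr₀pos.le
  _ = B := by field_simp
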